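/- If Λ is a Λ-sequence and f : [0,1] → ℝ is of bounded Λ-variation, then V_Λ(B_nf) ≤ V_Λ(f) for every n ≥ 1 (the Bernstein polynomials diminish the Λ-variation). -/

import Mathlib

open Filter Set MeasureTheory
open scoped ENNReal Topology

/-- `l` is a Λ-sequence (indexed from 0, so `l 0` plays the role of `λ₁`):
a nondecreasing sequence of positive reals whose reciprocals have divergent sum. -/
def IsLambdaSeq (l : ℕ → ℝ) : Prop :=
  Monotone l ∧ (∀ n, 0 < l n) ∧ ¬ Summable (fun n => 1 / l n)

/-- A proper Λ-sequence: additionally `λₙ → ∞`. -/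
def IsProperLambdaSeq (l : ℕ → ℝ) : Prop :=
  IsLambdaSeq l ∧ Tendsto l atTop atTop

/-- The Λ-variation of `f` computed over partition points taken from `K`:
the supremum of `∑ⱼ |f(x_{j+1}) - f(x_j)| / λ_{β(j)}` over all `m`, all nondecreasing
tuples `x₁ ≤ … ≤ x_{m+1}` of points of `K` and all permutations `β` of the gaps. -/
noncomputable def lamVarOn (l : ℕ → ℝ) (f : ℝ → ℝ) (K : Set ℝ) : ℝ≥0∞ :=
  ⨆ (m : ℕ) (x : Fin (m + 1) → ℝ) (_ : Monotone x) (_ : ∀ j, x j ∈ K)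
    (β : Equiv.Perm (Fin m)),
    ∑ j : Fin m, ENNReal.ofReal (|f (x j.succ) - f (x j.castSucc)| / l (β j))

/-- The Λ-variation of `f : [0,1] → ℝ`. -/
noncomputable def lamVar (l : ℕ → ℝ) (f : ℝ → ℝ) : ℝ≥0∞ :=
  lamVarOn l f (Set.Icc 0 1)

/-- The norm `‖f‖_Λ = V_Λ(f) + |f 0|` (valued in `[0,∞]`). -/
noncomputable def lamNorm (l : ℕ → ℝ) (f : ℝ → ℝ) : ℝ≥0∞ :=
  lamVar l f + ENNReal.ofReal |f 0|

/-- `f` is continuous in Λ-variation: `V_{Λ_(m)}(f) → 0` as `m → ∞`. -/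
def ContInLamVar (l : ℕ → ℝ) (f : ℝ → ℝ) : Prop :=
  Tendsto (fun m => lamVar (fun n => l (n + m)) f) atTop (𝓝 0)

/-- The restricted Λ-variation `V_{Λ,δ}(f)`: the supremum of `∑ⱼ |f(bⱼ) - f(aⱼ)| / λⱼ`
over all finite sequences of nonoverlapping closed subintervals `[aⱼ, bⱼ]` of `[0,1]`
of length at most `δ`, listed in any order. -/
noncomputable def lamVarDelta (l : ℕ → ℝ) (δ : ℝ) (f : ℝ → ℝ) : ℝ≥0∞ :=
  ⨆ (k : ℕ) (a : Fin k → ℝ) (b : Fin k → ℝ)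
    (_ : ∀ j, 0 ≤ a j ∧ a j ≤ b j ∧ b j ≤ 1 ∧ b j - a j ≤ δ)
    (_ : ∀ i j, i ≠ j → b i ≤ a j ∨ b j ≤ a i),
    ∑ j : Fin k, ENNReal.ofReal (|f (b j) - f (a j)| / l j)

/-- The `n`-th Bernstein polynomial of `f : [0,1] → ℝ`. -/
noncomputable def bern (n : ℕ) (f : ℝ → ℝ) (x : ℝ) : ℝ :=
  ∑ k ∈ Finset.range (n + 1),
    f ((k : ℝ) / n) * (n.choose k : ℝ) * x ^ k * (1 - x) ^ (n - k)

/-- The `n`-th Kantorovich polynomial of `f : [0,1] → ℝ`. -/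
noncomputable def kant (n : ℕ) (f : ℝ → ℝ) (x : ℝ) : ℝ :=
  ∑ k ∈ Finset.range (n + 1),
    (n.choose k : ℝ) * x ^ k * (1 - x) ^ (n - k) *
      ((n + 1) * ∫ t in ((k : ℝ) / (n + 1))..(((k : ℝ) + 1) / (n + 1)), f t)

open Finset

section helpers
lemma prod_ite_mem' (n : ℕ) (s : Finset (Fin n)) (c d : ℝ) :
    ∏ i : Fin n, (if i ∈ s then c else d) = c ^ s.card * d ^ (n - s.card) := by
  rw [Finset.prod_ite, Finset.prod_const, Finset.prod_const]
  congr 2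
  · simp
  · rw [show filter (fun x => x ∉ s) univ = sᶜ by ext; simp, Finset.card_compl]; simp

lemma expand_binom {M : ℕ} (p : Fin M → ℝ) (A : Finset (Fin M)) (g : ℕ → ℝ) (n : ℕ) :
    ∑ ω : Fin n → Fin M, (∏ i, p (ω i)) * g (Finset.filter (fun i => ω i ∈ A) Finset.univ).card
      = ∑ k ∈ Finset.range (n+1),
          (n.choose k : ℝ) * (∑ t ∈ A, p t)^k * (∑ t ∈ Aᶜ, p t)^(n-k) * g k := by
  classical
  set c := ∑ t ∈ A, p t with hc
  set d := ∑ t ∈ Aᶜ, p t with hd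
  have h1 : ∑ ω : Fin n → Fin M, (∏ i, p (ω i)) * g (filter (fun i => ω i ∈ A) univ).card
      = ∑ s : Finset (Fin n), (c ^ s.card * d ^ (n - s.card)) * g s.card := by
    rw [← Finset.sum_fiberwise (univ : Finset (Fin n → Fin M))
      (fun ω => filter (fun i => ω i ∈ A) univ)
      (fun ω => (∏ i, p (ω i)) * g (filter (fun i => ω i ∈ A) univ).card)]
    refine Finset.sum_congr rfl fun s _ => ?_
    have hfib : filter (fun ω : Fin n → Fin M => filter (fun i => ω i ∈ A) univ = s) univ =
        Fintype.piFinset (fun i => if i ∈ s then A else Aᶜ) := by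
      ext ω
      simp only [Finset.mem_filter, Finset.mem_univ, true_and, Fintype.mem_piFinset, Finset.ext_iff]
      constructor
      · intro h i
        have := h i
        by_cases hi : i ∈ s <;> simp_all [Finset.mem_compl]
      · intro h i
        have := h i
        by_cases hi : i ∈ s <;> simp_all [Finset.mem_compl]
    calc ∑ ω ∈ filter (fun ω : Fin n → Fin M => filter (fun i => ω i ∈ A) univ = s) univ,
            (∏ i, p (ω i)) * g (filter (fun i => ω i ∈ A) univ).card
        = ∑ ω ∈ Fintype.piFinset (fun i => if i ∈ s then A else Aᶜ),
            (∏ i, p (ω i)) * g s.card := by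
          rw [← hfib]; refine Finset.sum_congr rfl fun ω hω => ?_
          simp only [Finset.mem_filter] at hω; rw [hω.2]
      _ = (∑ ω ∈ Fintype.piFinset (fun i => if i ∈ s then A else Aᶜ), ∏ i, p (ω i)) * g s.card := by
          rw [Finset.sum_mul]
      _ = (∏ i : Fin n, ∑ t ∈ (if i ∈ s then A else Aᶜ), p t) * g s.card := by
          rw [Finset.prod_univ_sum]
      _ = (c ^ s.card * d ^ (n - s.card)) * g s.card := by
          congr 1
          have h2 : ∀ i : Fin n, (∑ t ∈ (if i ∈ s then A else Aᶜ), p t) =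
              if i ∈ s then c else d := by
            intro i; split_ifs <;> rfl
          simp_rw [h2]
          exact prod_ite_mem' n s c d
  rw [h1]
  rw [← Finset.sum_fiberwise_of_maps_to (g := fun s : Finset (Fin n) => s.card)
      (t := Finset.range (n+1))
      (fun s _ => Finset.mem_range.mpr (Nat.lt_succ_of_le (by simpa using Finset.card_le_univ s)))
      (fun s => (c ^ s.card * d ^ (n - s.card)) * g s.card)]
  refine Finset.sum_congr rfl fun k hk => ?_
  have hcard : (filter (fun s : Finset (Fin n) => s.card = k) univ).card = n.choose k := by
    rw [show (univ : Finset (Finset (Fin n))) = (univ : Finset (Fin n)).powerset from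
      Finset.powerset_univ.symm, ← Finset.powersetCard_eq_filter]
    simpa using Finset.card_powersetCard k (univ : Finset (Fin n))
  have h3 : ∀ s ∈ filter (fun s : Finset (Fin n) => s.card = k) univ,
      c ^ s.card * d ^ (n - s.card) * g s.card = c ^ k * d ^ (n - k) * g k := by
    intro s hs
    simp only [Finset.mem_filter] at hs
    rw [hs.2]
  rw [Finset.sum_congr rfl h3, Finset.sum_const, hcard, nsmul_eq_mul]
  ring
end helpers

/-- STATEMENT 1 proof. -/
theorem bernstein_diminishes_lamVar (l : ℕ → ℝ) (hl : IsLambdaSeq l)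
    (f : ℝ → ℝ) (hf : lamVar l f < ⊤) (n : ℕ) (hn : 1 ≤ n) :
    lamVar l (bern n f) ≤ lamVar l f := by
  classical
  have hn' : (0:ℝ) < n := by exact_mod_cast hn
  conv_lhs => rw [lamVar, lamVarOn]
  refine iSup_le fun m => iSup_le fun x => iSup_le fun hx => iSup_le fun hxK => iSup_le fun β => ?_
  -- the interpolation sequence z
  set z : ℕ → ℝ := fun j => if j = 0 then 0 else if j ≤ m + 1 then
      x ⟨min (j-1) m, Nat.lt_succ_of_le (min_le_right _ _)⟩ else 1 with hzdef
  have hz0 : z 0 = 0 := by simp [hzdef]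
  have hzlast : z (m + 2) = 1 := by simp [hzdef]
  have hzx : ∀ j : Fin (m+1), z ((j:ℕ) + 1) = x j := by
    intro j
    have hj := j.isLt
    simp only [hzdef]
    rw [if_neg (by omega), if_pos (by omega)]
    congr 1
    ext
    simp; omega
  have hzmono : Monotone z := by
    apply monotone_nat_of_le_succ
    intro j
    rcases Nat.eq_zero_or_pos j with h0 | h1
    · subst h0
      rw [hz0]
      simp only [hzdef]
      rw [if_neg (by omega), if_pos (by omega)]
      exact (Set.mem_Icc.mp (hxK _)).1
    · rcases Nat.lt_or_ge j (m+1) with hj1 | hj1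
      · simp only [hzdef]
        rw [if_neg (by omega), if_pos (by omega), if_neg (by omega), if_pos (by omega)]
        refine hx ?_
        simp only [Fin.mk_le_mk]
        omega
      · rcases Nat.eq_or_lt_of_le hj1 with hj2 | hj2
        · subst hj2
          simp only [hzdef]
          rw [if_neg (by omega), if_pos (by omega), if_neg (by omega), if_neg (by omega)]
          exact (Set.mem_Icc.mp (hxK _)).2
        · simp only [hzdef]
          rw [if_neg (by omega), if_neg (by omega), if_neg (by omega), if_neg (by omega)]
  -- the weights
  set p : Fin (m+2) → ℝ := fun t => z ((t:ℕ) + 1) - z (t:ℕ) with hpdef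
  have hp : ∀ t, 0 ≤ p t := fun t => sub_nonneg.mpr (hzmono (Nat.le_succ _))
  set A : ℕ → Finset (Fin (m+2)) := fun j => filter (fun t : Fin (m+2) => (t:ℕ) < j) univ
    with hAdef
  have hA : ∀ j, j ≤ m + 2 → ∑ t ∈ A j, p t = z j := by
    intro j hj
    rw [hAdef]
    rw [Finset.sum_filter]
    calc ∑ t : Fin (m+2), (if ((t:ℕ) < j) then p t else 0)
        = ∑ k ∈ Finset.range (m+2), (if k < j then z (k+1) - z k else 0) :=
          Fin.sum_univ_eq_sum_range (fun k => if k < j then z (k+1) - z k else 0) (m+2)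
      _ = ∑ k ∈ (Finset.range (m+2)).filter (fun k => k < j), (z (k+1) - z k) :=
          (Finset.sum_filter _ _).symm
      _ = ∑ k ∈ Finset.range j, (z (k+1) - z k) := by
          congr 1
          ext k
          simp only [Finset.mem_filter, Finset.mem_range]
          omega
      _ = z j - z 0 := Finset.sum_range_sub z j
      _ = z j := by rw [hz0]; ring
  have htot : ∑ t : Fin (m+2), p t = 1 := by
    have h1 : A (m+2) = Finset.univ := by
      rw [hAdef]; ext t; simp [t.isLt]
    have := hA (m+2) le_rfl
    rw [h1, hzlast] at this
    exact this
  have hAc : ∀ j, j ≤ m + 2 → ∑ t ∈ (A j)ᶜ, p t = 1 - z j := by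
    intro j hj
    have h1 := Finset.sum_add_sum_compl (A j) p
    rw [hA j hj, htot] at h1
    linarith
  -- the coupled partition points
  set F : (Fin n → Fin (m+2)) → Fin (m+1) → ℝ := fun ω j =>
    ((filter (fun i => ω i ∈ A ((j:ℕ)+1)) univ).card : ℝ) / n with hFdef
  set w : (Fin n → Fin (m+2)) → ℝ := fun ω => ∏ i, p (ω i) with hwdef
  have hw : ∀ ω, 0 ≤ w ω := fun ω => Finset.prod_nonneg fun i _ => hp _
  have hwsum : ∑ ω : Fin n → Fin (m+2), w ω = 1 := by
    rw [hwdef]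
    rw [← Fintype.prod_sum (fun (i : Fin n) (t : Fin (m+2)) => p t)]
    rw [Finset.prod_congr rfl fun i _ => htot]
    simp
  -- Bernstein identity
  have hB : ∀ j : Fin (m+1), bern n f (x j) = ∑ ω : Fin n → Fin (m+2), w ω * f (F ω j) := by
    intro j
    have hj : (j:ℕ) + 1 ≤ m + 2 := by have := j.isLt; omega
    have he := expand_binom p (A ((j:ℕ)+1)) (fun k : ℕ => f ((k:ℝ) / n)) n
    rw [hA _ hj, hAc _ hj, hzx j] at he
    rw [hwdef, hFdef]
    simp only []
    rw [he, bern]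
    refine Finset.sum_congr rfl fun k hk => ?_
    ring
  -- per-ω partitions are admissible
  have hFmono : ∀ ω, Monotone (F ω) := by
    intro ω j j' hjj
    rw [hFdef]
    simp only []
    have hcard : (filter (fun i => ω i ∈ A ((j:ℕ)+1)) univ).card ≤
        (filter (fun i => ω i ∈ A ((j':ℕ)+1)) univ).card := by
      apply Finset.card_le_card
      intro i hi
      simp only [hAdef, Finset.mem_filter, Finset.mem_univ, true_and] at hi ⊢
      have : (j:ℕ) ≤ (j':ℕ) := hjj
      omega
    have : ((filter (fun i => ω i ∈ A ((j:ℕ)+1)) univ).card : ℝ) ≤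
        ((filter (fun i => ω i ∈ A ((j':ℕ)+1)) univ).card : ℝ) := by exact_mod_cast hcard
    exact (div_le_div_iff_of_pos_right hn').mpr this
  have hFmem : ∀ ω (j : Fin (m+1)), F ω j ∈ Set.Icc (0:ℝ) 1 := by
    intro ω j
    rw [hFdef]
    refine Set.mem_Icc.mpr ⟨div_nonneg (Nat.cast_nonneg _) hn'.le, ?_⟩
    rw [div_le_one hn']
    have h1 := Finset.card_filter_le Finset.univ (fun i => ω i ∈ A ((j:ℕ)+1))
    have h2 : (Finset.univ : Finset (Fin n)).card = n := by simp
    exact_mod_cast h2 ▸ h1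
  have hV : ∀ ω, ∑ j : Fin m, ENNReal.ofReal (|f (F ω j.succ) - f (F ω j.castSucc)| / l (β j))
      ≤ lamVar l f := by
    intro ω
    rw [lamVar, lamVarOn]
    exact le_iSup_of_le m (le_iSup_of_le (F ω) (le_iSup_of_le (hFmono ω)
      (le_iSup_of_le (hFmem ω) (le_iSup_of_le β le_rfl))))
  have hdiff : ∀ j : Fin m, |bern n f (x j.succ) - bern n f (x j.castSucc)| ≤
      ∑ ω : Fin n → Fin (m+2), w ω * |f (F ω j.succ) - f (F ω j.castSucc)| := by
    intro j
    rw [hB j.succ, hB j.castSucc, ← Finset.sum_sub_distrib]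
    calc |∑ ω : Fin n → Fin (m+2), (w ω * f (F ω j.succ) - w ω * f (F ω j.castSucc))|
        ≤ ∑ ω : Fin n → Fin (m+2), |w ω * f (F ω j.succ) - w ω * f (F ω j.castSucc)| :=
          Finset.abs_sum_le_sum_abs _ _
      _ = ∑ ω : Fin n → Fin (m+2), w ω * |f (F ω j.succ) - f (F ω j.castSucc)| := by
          refine Finset.sum_congr rfl fun ω _ => ?_
          rw [← mul_sub, abs_mul, abs_of_nonneg (hw ω)]
  calc ∑ j : Fin m, ENNReal.ofReal (|bern n f (x j.succ) - bern n f (x j.castSucc)| / l (β j))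
      ≤ ∑ j : Fin m, ENNReal.ofReal
          ((∑ ω : Fin n → Fin (m+2), w ω * |f (F ω j.succ) - f (F ω j.castSucc)|) / l (β j)) := by
        refine Finset.sum_le_sum fun j _ => ENNReal.ofReal_le_ofReal ?_
        exact (div_le_div_iff_of_pos_right (hl.2.1 _)).mpr (hdiff j)
    _ = ∑ j : Fin m, ∑ ω : Fin n → Fin (m+2),
          ENNReal.ofReal (w ω * (|f (F ω j.succ) - f (F ω j.castSucc)| / l (β j))) := by
        refine Finset.sum_congr rfl fun j _ => ?_
        rw [Finset.sum_div]
        simp_rw [mul_div_assoc]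
        exact ENNReal.ofReal_sum_of_nonneg fun ω _ =>
          mul_nonneg (hw ω) (div_nonneg (abs_nonneg _) (hl.2.1 _).le)
    _ = ∑ ω : Fin n → Fin (m+2), ∑ j : Fin m,
          ENNReal.ofReal (w ω * (|f (F ω j.succ) - f (F ω j.castSucc)| / l (β j))) :=
        Finset.sum_comm
    _ = ∑ ω : Fin n → Fin (m+2), ENNReal.ofReal (w ω) *
          ∑ j : Fin m, ENNReal.ofReal (|f (F ω j.succ) - f (F ω j.castSucc)| / l (β j)) := by
        refine Finset.sum_congr rfl fun ω _ => ?_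
        rw [Finset.mul_sum]
        exact Finset.sum_congr rfl fun j _ => ENNReal.ofReal_mul (hw ω)
    _ ≤ ∑ ω : Fin n → Fin (m+2), ENNReal.ofReal (w ω) * lamVar l f :=
        Finset.sum_le_sum fun ω _ => mul_le_mul_right (hV ω) _
    _ = ENNReal.ofReal (∑ ω : Fin n → Fin (m+2), w ω) * lamVar l f := by
        rw [ENNReal.ofReal_sum_of_nonneg fun ω _ => hw ω, Finset.sum_mul]
    _ = lamVar l f := by rw [hwsum, ENNReal.ofReal_one, one_mul]
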